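/- Let the sortition instance be κ-rich with n pool members and panel size k ≥ 1, and let c ≤ κ'·n for some 0 ≤ κ' < κ. Then the internal manipulability of uniform panel selection (MaxEntropy) satisfies: for every coalition C of size c, every joint misreport, and every coalition member i ∈ C, π̃(i) − π(i) ≤ k/((κ−κ')^k · n), where π and π̃ are the selection probabilities of i under the uniform distribution over the true panel set 𝒫 and over the manipulated panel set 𝒫̃, respectively. -/

import Mathlib

open scoped Classical

/-- A sortition instance (features `feat`, panel set `Pan`, panel size `k`) is `κ`-rich if there
is a set `Wstar` of feature-value vectors present in the pool such that every vector in `Wstar`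
is shared by at least `κ·n + k` pool members, and some panel consists solely of members with
vectors in `Wstar`. -/
def IsRich {N : Type*} [Fintype N] {F : Type*} {V : F → Type*}
    (feat : N → ∀ f : F, V f) (Pan : Finset (Finset N)) (k : ℕ) (κ : ℝ) : Prop :=
  ∃ Wstar : Set (∀ f : F, V f),
    (∀ wv ∈ Wstar, ∃ i : N, feat i = wv) ∧
    (∀ wv ∈ Wstar,
      κ * (Fintype.card N) + k ≤ ((Finset.univ.filter fun i : N => feat i = wv).card : ℝ)) ∧
    ∃ P₀ ∈ Pan, ∀ i ∈ P₀, feat i ∈ Wstar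

/-- Internal manipulability of uniform (MaxEntropy) panel selection: in a
`κ`-rich instance with `n` pool members and panel size `k ≥ 1`, for every coalition `C` of size
`c ≤ κ'·n` (with `0 ≤ κ' < κ`), every joint misreport `feat'` (agreeing with `feat` off `C`),
and every coalition member `i ∈ C`, the gain in selection probability under the uniform
distributions over the manipulated and true panel sets is at most `k/((κ−κ')^k · n)`. -/
theorem internal_manipulability_bound
    {N : Type*} [Fintype N] [DecidableEq N]
    {F : Type*} {V : F → Type*}
    (feat : N → ∀ f : F, V f) (k : ℕ) (hk : 1 ≤ k)
    (ℓ u : ((f : F) × V f) → ℕ)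
    (Pan : Finset (Finset N))
    (hPan : Pan = Finset.univ.filter fun P : Finset N =>
      P.card = k ∧ ∀ (f : F) (v : V f),
        ℓ ⟨f, v⟩ ≤ (P.filter fun t => feat t f = v).card ∧
        (P.filter fun t => feat t f = v).card ≤ u ⟨f, v⟩)
    (κ κ' : ℝ) (hκ : 0 < κ) (hκ'0 : 0 ≤ κ') (hκ' : κ' < κ)
    (hrich : IsRich feat Pan k κ) :
    ∀ (feat' : N → ∀ f : F, V f) (C : Finset N),
      (C.card : ℝ) ≤ κ' * Fintype.card N →
      (∀ i ∉ C, feat' i = feat i) →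
      ∀ Pant : Finset (Finset N),
        Pant = (Finset.univ.filter fun P : Finset N =>
          P.card = k ∧ ∀ (f : F) (v : V f),
            ℓ ⟨f, v⟩ ≤ (P.filter fun t => feat' t f = v).card ∧
            (P.filter fun t => feat' t f = v).card ≤ u ⟨f, v⟩) →
        ∀ i ∈ C,
          ((Pant.filter fun P => i ∈ P).card : ℝ) / Pant.card -
              ((Pan.filter fun P => i ∈ P).card : ℝ) / Pan.card ≤
            k / ((κ - κ') ^ k * Fintype.card N) := by
  intro feat' C hC hCoff Pant hPant i hiC
  classical
  obtain ⟨Wstar, hWpool, hWbig, P₀, hP₀Pan, hP₀W⟩ := hrich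
  set n := Fintype.card N with hn
  obtain ⟨-, hP₀card, hP₀quot⟩ := Finset.mem_filter.1 (hPan ▸ hP₀Pan)
  have hkpos : 0 < k := hk
  have hP₀ne : P₀.Nonempty := Finset.card_pos.1 (by rw [hP₀card]; exact hkpos)
  obtain ⟨t₀, ht₀⟩ := hP₀ne
  have hnpos : 0 < n := Fintype.card_pos_iff.2 ⟨t₀⟩
  have hnR : (0:ℝ) < n := by exact_mod_cast hnpos
  -- basic sets
  set W : Finset (∀ f : F, V f) := P₀.image feat with hW
  set cc : (∀ f : F, V f) → ℕ := fun w => (P₀.filter fun t => feat t = w).card with hcc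
  set A : (∀ f : F, V f) → Finset N :=
    fun w => (Finset.univ.filter fun j : N => feat j = w).filter (fun j => j ∉ C) with hA
  set m : (∀ f : F, V f) → ℕ := fun w => (A w).card with hm
  have hAmem : ∀ w, ∀ t ∈ A w, feat t = w ∧ t ∉ C := by
    intro w t ht
    have := Finset.mem_filter.1 ht
    exact ⟨(Finset.mem_filter.1 this.1).2, this.2⟩
  have hr : (0:ℝ) < (κ - κ') * n := mul_pos (by linarith) hnR
  -- class sizes
  have hmW : ∀ w ∈ W, (κ - κ') * n + k ≤ (m w : ℝ) := by
    intro w hw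
    obtain ⟨t, ht, rfl⟩ := Finset.mem_image.1 hw
    have h1 := hWbig _ (hP₀W t ht)
    set B := Finset.univ.filter fun j : N => feat j = feat t with hB
    have hsplit := Finset.card_filter_add_card_filter_not (s := B)
      (p := fun j => j ∉ C)
    have h2 : (B.filter fun j => ¬ j ∉ C).card ≤ C.card := by
      refine Finset.card_le_card fun j hj => ?_
      have := (Finset.mem_filter.1 hj).2
      exact not_not.1 this
    have h2R : ((B.filter fun j => ¬ j ∉ C).card : ℝ) ≤ κ' * n :=
      le_trans (by exact_mod_cast h2) hC
    have hsplitR : (m (feat t) : ℝ) + ((B.filter fun j => ¬ j ∉ C).card : ℝ)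
        = (B.card : ℝ) := by exact_mod_cast hsplit
    linarith
  have hsum : ∑ w ∈ W, cc w = k := by
    rw [← hP₀card]; exact (Finset.card_eq_sum_card_image feat P₀).symm
  have hck : ∀ w, cc w ≤ k := fun w => by
    rw [← hP₀card]; exact Finset.card_le_card (Finset.filter_subset _ _)
  have hkm : ∀ w ∈ W, k ≤ m w := by
    intro w hw
    have := hmW w hw
    have : (k:ℝ) ≤ (m w : ℝ) := by nlinarith [hr.le]
    exact_mod_cast this
  -- counts of feature-value pairs in P₀
  have hcount₀ : ∀ (f : F) (v : V f),
      (P₀.filter fun t => feat t f = v).card = ∑ w ∈ W, if w f = v then cc w else 0 := by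
    intro f v
    rw [Finset.card_eq_sum_card_fiberwise (f := feat) (t := W)
      (fun x hx => Finset.mem_image_of_mem _ (Finset.mem_of_mem_filter x hx))]
    refine Finset.sum_congr rfl fun w hw => ?_
    by_cases hfv : w f = v
    · rw [if_pos hfv, hcc]
      congr 1
      ext t
      simp only [Finset.mem_filter]
      constructor
      · rintro ⟨⟨ht, -⟩, h2⟩; exact ⟨ht, h2⟩
      · rintro ⟨ht, h2⟩; exact ⟨⟨ht, by rw [h2, hfv]⟩, h2⟩
    · rw [if_neg hfv, Finset.card_eq_zero, Finset.filter_eq_empty_iff]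
      rintro t ht h2
      exact hfv (by rw [← h2, (Finset.mem_filter.1 ht).2])
  -- the product family of alternative panels
  set D := W.pi (fun w => (A w).powersetCard (cc w)) with hD
  have hDcard : D.card = ∏ w ∈ W, (m w).choose (cc w) := by
    rw [hD, Finset.card_pi]
    exact Finset.prod_congr rfl fun w _ => by rw [Finset.card_powersetCard]
  set φ : (∀ w ∈ W, Finset N) → Finset N :=
    fun g => W.attach.biUnion fun w => g w.1 w.2 with hφ
  have hgD : ∀ g ∈ D, ∀ (w) (hw : w ∈ W), g w hw ⊆ A w ∧ (g w hw).card = cc w := by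
    intro g hg w hw
    exact Finset.mem_powersetCard.1 (Finset.mem_pi.1 hg w hw)
  have hAdisj : ∀ w w', w ≠ w' → Disjoint (A w) (A w') := by
    intro w w' hne
    rw [Finset.disjoint_left]
    intro t ht ht'
    exact hne ((hAmem w t ht).1.symm.trans (hAmem w' t ht').1)
  have hgdisj : ∀ g ∈ D, ∀ x ∈ W.attach, ∀ y ∈ W.attach, x ≠ y →
      Disjoint (g x.1 x.2) (g y.1 y.2) := by
    intro g hg x _ y _ hxy
    have hne : x.1 ≠ y.1 := fun h => hxy (Subtype.ext h)
    exact Finset.disjoint_of_subset_left (hgD g hg x.1 x.2).1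
      (Finset.disjoint_of_subset_right (hgD g hg y.1 y.2).1 (hAdisj _ _ hne))
  have hφcard : ∀ g ∈ D, (φ g).card = k := by
    intro g hg
    rw [hφ]
    rw [Finset.card_biUnion (hgdisj g hg)]
    rw [← hsum, ← Finset.sum_attach W cc]
    exact Finset.sum_congr rfl fun w _ => (hgD g hg w.1 w.2).2
  have hφmem : ∀ g ∈ D, ∀ t ∈ φ g, ∃ (w : ∀ f : F, V f) (hw : w ∈ W),
      t ∈ g w hw ∧ feat t = w ∧ t ∉ C := by
    intro g hg t ht
    obtain ⟨w, -, htw⟩ := Finset.mem_biUnion.1 ht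
    exact ⟨w.1, w.2, htw, hAmem w.1 t ((hgD g hg w.1 w.2).1 htw)⟩
  have hcountg : ∀ g ∈ D, ∀ (f : F) (v : V f),
      ((φ g).filter fun t => feat' t f = v).card = ∑ w ∈ W, if w f = v then cc w else 0 := by
    intro g hg f v
    rw [hφ, Finset.filter_biUnion]
    rw [Finset.card_biUnion (fun x hx y hy hxy =>
      Finset.disjoint_filter_filter (hgdisj g hg x hx y hy hxy))]
    rw [← Finset.sum_attach W (fun w => if w f = v then cc w else 0)]
    refine Finset.sum_congr rfl fun w _ => ?_
    have hfe : ∀ t ∈ g w.1 w.2, feat' t f = (w.1) f := by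
      intro t ht
      obtain ⟨h1, h2⟩ := hAmem w.1 t ((hgD g hg w.1 w.2).1 ht)
      rw [hCoff t h2, h1]
    by_cases hfv : (w.1) f = v
    · rw [if_pos hfv, ← (hgD g hg w.1 w.2).2]
      congr 1
      exact Finset.filter_true_of_mem fun t ht => by rw [hfe t ht, hfv]
    · rw [if_neg hfv, Finset.card_eq_zero, Finset.filter_eq_empty_iff]
      intro t ht h2
      exact hfv (by rw [← hfe t ht, h2])
  have hφPant : ∀ g ∈ D, φ g ∈ Pant := by
    intro g hg
    rw [hPant, Finset.mem_filter]
    refine ⟨Finset.mem_univ _, hφcard g hg, fun f v => ?_⟩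
    rw [hcountg g hg f v, ← hcount₀ f v]
    exact hP₀quot f v
  have hrec : ∀ g ∈ D, ∀ (w) (hw : w ∈ W), (φ g).filter (fun t => feat t = w) = g w hw := by
    intro g hg w hw
    ext t
    simp only [Finset.mem_filter]
    constructor
    · rintro ⟨ht, hf⟩
      obtain ⟨w', hw', htw, hfeq, -⟩ := hφmem g hg t ht
      have : w' = w := by rw [← hfeq, hf]
      subst this
      exact htw
    · intro ht
      have hfe := (hAmem w t ((hgD g hg w hw).1 ht)).1
      refine ⟨?_, hfe⟩
      rw [hφ]
      exact Finset.mem_biUnion.2 ⟨⟨w, hw⟩, Finset.mem_attach _ _, ht⟩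
  have hφinj : Set.InjOn φ D := by
    intro g hg g' hg' h
    funext w hw
    rw [← hrec g hg w hw, h, hrec g' hg' w hw]
  have hPantLB : ∏ w ∈ W, (m w).choose (cc w) ≤ Pant.card := by
    rw [← hDcard]
    exact Finset.card_le_card_of_injOn φ (fun g hg => hφPant g hg) hφinj
  -- upper bound on panels containing i
  have hUB : (Pant.filter fun P => i ∈ P).card ≤ (n-1).choose (k-1) := by
    have hcardT : (((Finset.univ.erase i).powersetCard (k-1)).card) = (n-1).choose (k-1) := by
      rw [Finset.card_powersetCard, Finset.card_erase_of_mem (Finset.mem_univ i),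
        Finset.card_univ]
    rw [← hcardT]
    refine Finset.card_le_card_of_injOn (fun P => P.erase i) ?_ ?_
    · intro P hP
      obtain ⟨hP1, hPi⟩ := Finset.mem_filter.1 hP
      obtain ⟨-, hPcard, -⟩ := Finset.mem_filter.1 (hPant ▸ hP1)
      rw [Finset.mem_coe, Finset.mem_powersetCard]
      exact ⟨Finset.erase_subset_erase i (Finset.subset_univ P),
        by rw [Finset.card_erase_of_mem hPi, hPcard]⟩
    · intro P hP P' hP' h
      have hPi := (Finset.mem_filter.1 hP).2
      have hPi' := (Finset.mem_filter.1 hP').2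
      rw [← Finset.insert_erase hPi, ← Finset.insert_erase hPi']
      exact congrArg (insert i) h
  -- positivity of manipulated panel count
  have hXpos : 0 < ∏ w ∈ W, (m w).choose (cc w) :=
    Finset.prod_pos fun w hw => Nat.choose_pos (le_trans (hck w) (hkm w hw))
  have hbpos : 0 < Pant.card := lt_of_lt_of_le hXpos hPantLB
  -- real arithmetic
  set r : ℝ := (κ - κ') * n with hrdef
  have hRchoose : ∀ w ∈ W, r ^ (cc w) ≤ ((m w).choose (cc w) : ℝ) * (Nat.factorial (cc w)) := by
    intro w hw
    have h1 : ((m w).descFactorial (cc w) : ℝ)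
        = ((m w).choose (cc w) : ℝ) * (Nat.factorial (cc w)) := by
      rw [Nat.descFactorial_eq_factorial_mul_choose]
      push_cast
      ring
    rw [← h1, Nat.descFactorial_eq_prod_range, Nat.cast_prod]
    calc r ^ (cc w) = ∏ _t ∈ Finset.range (cc w), r := by
          rw [Finset.prod_const, Finset.card_range]
      _ ≤ ∏ t ∈ Finset.range (cc w), ((m w - t : ℕ) : ℝ) := by
          refine Finset.prod_le_prod (fun _ _ => hr.le) fun t ht => ?_
          have htlt : t < cc w := Finset.mem_range.1 ht
          have htm : t ≤ m w := le_trans htlt.le (le_trans (hck w) (hkm w hw))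
          rw [Nat.cast_sub htm]
          have htk : (t : ℝ) < k := by
            exact_mod_cast lt_of_lt_of_le htlt (hck w)
          have := hmW w hw
          linarith
  have hfacprod : (∏ w ∈ W, Nat.factorial (cc w)) ≤ Nat.factorial k := by
    refine Nat.le_of_dvd (Nat.factorial_pos k) ?_
    rw [← hsum]
    exact Nat.prod_factorial_dvd_factorial_sum W cc
  have hrk : r ^ k ≤ (∏ w ∈ W, ((m w).choose (cc w) : ℝ)) * (Nat.factorial k : ℝ) := by
    have h0 : r ^ k = ∏ w ∈ W, r ^ (cc w) := by
      rw [Finset.prod_pow_eq_pow_sum, hsum]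
    calc r ^ k = ∏ w ∈ W, r ^ (cc w) := h0
      _ ≤ ∏ w ∈ W, ((m w).choose (cc w) : ℝ) * (Nat.factorial (cc w)) := by
          refine Finset.prod_le_prod (fun w _ => pow_nonneg hr.le _) fun w hw => hRchoose w hw
      _ = (∏ w ∈ W, ((m w).choose (cc w) : ℝ)) * ∏ w ∈ W, (Nat.factorial (cc w) : ℝ) := by
          rw [← Finset.prod_mul_distrib]
      _ ≤ (∏ w ∈ W, ((m w).choose (cc w) : ℝ)) * (Nat.factorial k : ℝ) := by
          refine mul_le_mul_of_nonneg_left ?_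
            (Finset.prod_nonneg fun w _ => Nat.cast_nonneg _)
          exact_mod_cast hfacprod
  have hdesc : (Nat.factorial (k-1)) * ((n-1).choose (k-1)) ≤ n ^ (k-1) := by
    rw [← Nat.descFactorial_eq_factorial_mul_choose]
    exact le_trans (Nat.descFactorial_le_pow _ _) (Nat.pow_le_pow_left (Nat.sub_le n 1) _)
  -- put it all together
  have hE : (0:ℝ) < (κ - κ') ^ k * n := mul_pos (pow_pos (by linarith) k) hnR
  have hπ0 : (0:ℝ) ≤ ((Pan.filter fun P => i ∈ P).card : ℝ) / Pan.card :=
    div_nonneg (Nat.cast_nonneg _) (Nat.cast_nonneg _)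
  have hmain : ((Pant.filter fun P => i ∈ P).card : ℝ) / Pant.card
      ≤ k / ((κ - κ') ^ k * n) := by
    rw [div_le_div_iff₀ (by exact_mod_cast hbpos) hE]
    have hfk1 : (0:ℝ) < (Nat.factorial (k-1) : ℝ) := by exact_mod_cast Nat.factorial_pos _
    rw [← mul_le_mul_iff_of_pos_right hfk1]
    have hkfac : (Nat.factorial k : ℝ) = k * Nat.factorial (k-1) := by
      exact_mod_cast (Nat.mul_factorial_pred hkpos.ne').symm
    have hstep1 : ((Pant.filter fun P => i ∈ P).card : ℝ) * ((κ - κ') ^ k * n)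
          * (Nat.factorial (k-1))
        ≤ ((n-1).choose (k-1) : ℝ) * (Nat.factorial (k-1)) * ((κ - κ') ^ k * n) := by
      have h1 : ((Pant.filter fun P => i ∈ P).card : ℝ) ≤ ((n-1).choose (k-1) : ℝ) := by
        exact_mod_cast hUB
      calc ((Pant.filter fun P => i ∈ P).card : ℝ) * ((κ - κ') ^ k * n) * (Nat.factorial (k-1))
          = ((Pant.filter fun P => i ∈ P).card : ℝ)
            * (((κ - κ') ^ k * n) * (Nat.factorial (k-1))) := by ring
        _ ≤ ((n-1).choose (k-1) : ℝ) * (((κ - κ') ^ k * n) * (Nat.factorial (k-1))) := by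
            exact mul_le_mul_of_nonneg_right h1 (by positivity)
        _ = ((n-1).choose (k-1) : ℝ) * (Nat.factorial (k-1)) * ((κ - κ') ^ k * n) := by ring
    have hstep2 : ((n-1).choose (k-1) : ℝ) * (Nat.factorial (k-1)) * ((κ - κ') ^ k * n)
        ≤ r ^ k := by
      have h2 : ((n-1).choose (k-1) : ℝ) * (Nat.factorial (k-1)) ≤ (n:ℝ) ^ (k-1) := by
        have := hdesc
        have hcast : ((Nat.factorial (k-1)) * ((n-1).choose (k-1)) : ℝ) ≤ (n:ℝ) ^ (k-1) := by
          exact_mod_cast hdesc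
        linarith [hcast]
      have hnk : (n:ℝ) ^ (k-1) * n = (n:ℝ) ^ k := by
        rw [← pow_succ, Nat.sub_add_cancel hk]
      have hrkeq : r ^ k = (κ - κ') ^ k * (n:ℝ) ^ k := by
        rw [hrdef, mul_pow]
      rw [hrkeq, ← hnk]
      calc ((n-1).choose (k-1) : ℝ) * (Nat.factorial (k-1)) * ((κ - κ') ^ k * n)
          ≤ (n:ℝ) ^ (k-1) * ((κ - κ') ^ k * n) := by
            exact mul_le_mul_of_nonneg_right h2 (by positivity)
        _ = (κ - κ') ^ k * ((n:ℝ) ^ (k-1) * n) := by ring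
    have hstep3 : r ^ k ≤ (Pant.card : ℝ) * Nat.factorial k := by
      refine le_trans hrk ?_
      refine mul_le_mul_of_nonneg_right ?_ (Nat.cast_nonneg _)
      exact_mod_cast hPantLB
    calc ((Pant.filter fun P => i ∈ P).card : ℝ) * ((κ - κ') ^ k * n) * (Nat.factorial (k-1))
        ≤ r ^ k := le_trans hstep1 hstep2
      _ ≤ (Pant.card : ℝ) * Nat.factorial k := hstep3
      _ = (k : ℝ) * (Pant.card : ℝ) * (Nat.factorial (k-1)) := by rw [hkfac]; ring
  linarith
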